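/- For sequences s, t : ℕ → ℂ, define a : ℕ → ℕ → ℂ by a(0,k) = [k=0], a(n,0) = s(0)·a(n-1,0) + t(0)·a(n-1,1), and for k ≥ 1, a(n,k) = a(n-1,k-1) + s(k)·a(n-1,k) + t(k)·a(n-1,k+1). Then the Hankel determinant det((a(i+j,0))_{i,j=0}^{n-1}) equals ∏_{i=1}^{n-1} ∏_{k=0}^{i-1} t(k). -/

import Mathlib

theorem stmt_1 (s t : ℕ → ℂ) (a : ℕ → ℕ → ℂ)
    (h0 : ∀ k, a 0 k = if k = 0 then 1 else 0)
    (h1 : ∀ n, a (n + 1) 0 = s 0 * a n 0 + t 0 * a n 1)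
    (h2 : ∀ n k, a (n + 1) (k + 1) = a n k + s (k + 1) * a n (k + 1) + t (k + 1) * a n (k + 2))
    (n : ℕ) :
    Matrix.det (Matrix.of (fun i j : Fin n => a (i.1 + j.1) 0))
      = ∏ i ∈ Finset.Icc 1 (n - 1), ∏ k ∈ Finset.range i, t k := by
  classical
  set w : ℕ → ℂ := fun k => ∏ h ∈ Finset.range k, t h with hw
  -- vanishing above the diagonal
  have hz : ∀ m k, m < k → a m k = 0 := by
    intro m
    induction m with
    | zero => intro k hk; rw [h0, if_neg (by omega)]
    | succ m ih =>
      intro k hk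
      obtain ⟨k', rfl⟩ : ∃ k', k = k' + 1 := ⟨k - 1, by omega⟩
      rw [h2, ih k' (by omega), ih (k' + 1) (by omega), ih (k' + 2) (by omega)]
      ring
  -- diagonal is 1
  have hd : ∀ m, a m m = 1 := by
    intro m
    induction m with
    | zero => simp [h0]
    | succ m ih =>
      rw [h2, ih, hz m (m + 1) (by omega), hz m (m + 2) (by omega)]
      ring
  -- truncation: sums don't depend on the range once it exceeds i
  have htr : ∀ i j M N, i < M → M ≤ N →
      ∑ k ∈ Finset.range N, a i k * a j k * w k
        = ∑ k ∈ Finset.range M, a i k * a j k * w k := by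
    intro i j M N hM hMN
    refine (Finset.sum_subset (Finset.range_subset_range.mpr hMN) ?_).symm
    intro k hk hk'
    simp only [Finset.mem_range, not_lt] at hk hk'
    rw [hz i k (by omega)]
    ring
  -- the general recurrence with the k = 0 case included
  have hrec : ∀ m k, a (m + 1) k
      = (if k = 0 then 0 else a m (k - 1)) + s k * a m k + t k * a m (k + 1) := by
    intro m k
    cases k with
    | zero => simpa using h1 m
    | succ k => simpa using h2 m k
  have hwsucc : ∀ k, w (k + 1) = w k * t k := by
    intro k; simp [hw, Finset.prod_range_succ]
  -- the symmetry step
  have hsym : ∀ i j, ∑ k ∈ Finset.range (i + j + 3), a (i + 1) k * a j k * w k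
      = ∑ k ∈ Finset.range (i + j + 3), a i k * a (j + 1) k * w k := by
    intro i j
    have expandL : ∑ k ∈ Finset.range (i + j + 3), a (i + 1) k * a j k * w k
        = (∑ k ∈ Finset.range (i + j + 3),
            (if k = 0 then 0 else a i (k - 1)) * a j k * w k)
          + (∑ k ∈ Finset.range (i + j + 3), s k * a i k * a j k * w k)
          + (∑ k ∈ Finset.range (i + j + 3), t k * a i (k + 1) * a j k * w k) := by
      rw [← Finset.sum_add_distrib, ← Finset.sum_add_distrib]
      refine Finset.sum_congr rfl fun k _ => ?_
      rw [hrec i k]; ring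
    have expandR : ∑ k ∈ Finset.range (i + j + 3), a i k * a (j + 1) k * w k
        = (∑ k ∈ Finset.range (i + j + 3),
            a i k * (if k = 0 then 0 else a j (k - 1)) * w k)
          + (∑ k ∈ Finset.range (i + j + 3), s k * a i k * a j k * w k)
          + (∑ k ∈ Finset.range (i + j + 3), a i k * (t k * a j (k + 1)) * w k) := by
      rw [← Finset.sum_add_distrib, ← Finset.sum_add_distrib]
      refine Finset.sum_congr rfl fun k _ => ?_
      rw [hrec j k]; ring
    have e1 : ∑ k ∈ Finset.range (i + j + 3),
          (if k = 0 then 0 else a i (k - 1)) * a j k * w k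
        = ∑ k ∈ Finset.range (i + j + 3), a i k * (t k * a j (k + 1)) * w k := by
      rw [Finset.sum_range_succ' (fun k => (if k = 0 then 0 else a i (k - 1)) * a j k * w k)]
      rw [Finset.sum_range_succ (fun k => a i k * (t k * a j (k + 1)) * w k)]
      rw [hz j (i + j + 2 + 1) (by omega)]
      simp only [Nat.add_sub_cancel, Nat.succ_ne_zero, if_neg, if_pos, mul_zero, zero_mul,
        add_zero, reduceIte]
      refine Finset.sum_congr rfl fun k hk => ?_
      rw [hwsucc k]; ring
    have e2 : ∑ k ∈ Finset.range (i + j + 3), t k * a i (k + 1) * a j k * w k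
        = ∑ k ∈ Finset.range (i + j + 3),
            a i k * (if k = 0 then 0 else a j (k - 1)) * w k := by
      rw [Finset.sum_range_succ' (fun k => a i k * (if k = 0 then 0 else a j (k - 1)) * w k)]
      rw [Finset.sum_range_succ (fun k => t k * a i (k + 1) * a j k * w k)]
      rw [hz i (i + j + 2 + 1) (by omega)]
      simp only [Nat.add_sub_cancel, Nat.succ_ne_zero, if_neg, if_pos, mul_zero, zero_mul,
        add_zero, reduceIte]
      refine Finset.sum_congr rfl fun k hk => ?_
      rw [hwsucc k]; ring
    rw [expandL, expandR, e1, e2]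
    ring
  -- main convolution identity
  have key : ∀ i j, ∑ k ∈ Finset.range (i + j + 2), a i k * a j k * w k = a (i + j) 0 := by
    intro i
    induction i with
    | zero =>
      intro j
      simp only [zero_add]
      rw [htr 0 j 1 (j + 2) (by omega) (by omega)]
      simp [h0, hw]
    | succ i ih =>
      intro j
      rw [show i + 1 + j + 2 = i + j + 3 from by omega, hsym i j,
        show i + j + 3 = i + (j + 1) + 2 from by omega,
        show i + 1 + j = i + (j + 1) from by omega]
      exact ih (j + 1)
  -- determinant computation
  set L : Matrix (Fin n) (Fin n) ℂ := Matrix.of (fun i k : Fin n => a i.1 k.1) with hL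
  set D : Matrix (Fin n) (Fin n) ℂ := Matrix.diagonal (fun k : Fin n => w k.1) with hD
  have hfact : Matrix.of (fun i j : Fin n => a (i.1 + j.1) 0) = L * D * L.transpose := by
    ext i j
    rw [Matrix.mul_apply]
    have hterm : ∀ k : Fin n, (L * D) i k * L.transpose k j = a i.1 k.1 * a j.1 k.1 * w k.1 := by
      intro k
      rw [hD, Matrix.mul_diagonal]
      simp only [hL, Matrix.transpose_apply, Matrix.of_apply]
      ring
    rw [Finset.sum_congr rfl fun k _ => hterm k]
    rw [Fin.sum_univ_eq_sum_range (fun k => a i.1 k * a j.1 k * w k) n]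
    rw [htr i.1 j.1 (i.1 + 1) n (by omega) (by omega),
      ← htr i.1 j.1 (i.1 + 1) (i.1 + j.1 + 2) (by omega) (by omega), key]
    rfl
  rw [hfact, Matrix.det_mul, Matrix.det_mul, Matrix.det_transpose]
  have hLtri : L.BlockTriangular OrderDual.toDual := by
    intro i j hij
    have : (i : Fin n) < j := hij
    exact hz i.1 j.1 this
  have hLdet : L.det = 1 := by
    rw [Matrix.det_of_lowerTriangular L hLtri]
    simp [hL, hd]
  rw [hLdet, hD, Matrix.det_diagonal]
  simp only [one_mul, mul_one]
  rw [Fin.prod_univ_eq_prod_range (fun k => w k) n]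
  cases n with
  | zero => simp
  | succ m =>
    simp only [Nat.add_sub_cancel]
    rw [show Finset.range (m + 1) = Finset.Icc 0 m from by
      rw [Finset.range_eq_Ico, Finset.Ico_add_one_right_eq_Icc]]
    rw [← Finset.mul_prod_Ioc_eq_prod_Icc (Nat.zero_le m)]
    rw [show Finset.Ioc 0 m = Finset.Icc 1 m from (Finset.Icc_add_one_left_eq_Ioc 0 m)]
    simp [hw]
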